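/- Let λ₁, ..., λ_n be nonzero reals with m = min_k |λ_k| > 0, and let Δ > 0, z ∈ ℝ. Define the truncation error E(N) = | Σ_{k=N+1}^∞ (1/(π(k+½))) Im[ φ((k+½)Δ) e^{−j(k+½)Δz} ] | where φ(u) = Π_{i=1}^n (1 − 2juλ_i)^{−1/2} (principal branch). Then E(N) ≤ (2/(nπ)) (2NΔm)^{−n/2}. -/

import Mathlib

open Real Filter

set_option maxHeartbeats 1000000

-- telescoping-type pointwise bound
lemma aux_step (a s : ℝ) (ha : 0 < a) (hs : 0 < s) :
    s * (a + 1) ^ (-(s + 1)) ≤ a ^ (-s) - (a + 1) ^ (-s) := by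
  have hb : (0:ℝ) < a + 1 := by linarith
  have hlog : 1 / (a + 1) ≤ Real.log (a + 1) - Real.log a := by
    have h1 := Real.log_le_sub_one_of_pos (div_pos ha hb)
    rw [Real.log_div ha.ne' hb.ne'] at h1
    have h2 : a / (a + 1) - 1 = -(1 / (a + 1)) := by field_simp; ring
    linarith
  rw [Real.rpow_def_of_pos ha, Real.rpow_def_of_pos hb, Real.rpow_def_of_pos hb]
  have key : Real.exp (Real.log a * -s)
      = Real.exp (Real.log (a + 1) * -s) * Real.exp (s * (Real.log (a + 1) - Real.log a)) := by
    rw [← Real.exp_add]; ring_nf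
  have e1 : s * (Real.log (a + 1) - Real.log a) + 1
      ≤ Real.exp (s * (Real.log (a + 1) - Real.log a)) := Real.add_one_le_exp _
  have e2 : Real.exp (Real.log (a + 1) * -(s + 1))
      = Real.exp (Real.log (a + 1) * -s) * (a + 1)⁻¹ := by
    rw [show Real.log (a+1) * -(s+1) = Real.log (a+1) * -s + -Real.log (a+1) by ring,
      Real.exp_add, Real.exp_neg, Real.exp_log hb]
  have hp : (0:ℝ) < Real.exp (Real.log (a + 1) * -s) := Real.exp_pos _
  rw [key, e2]
  have e3 : s * (Real.log (a+1) - Real.log a) ≥ s * (1/(a+1)) :=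
    mul_le_mul_of_nonneg_left hlog hs.le
  have h4 := mul_le_mul_of_nonneg_left e1 hp.le
  have h5 := mul_le_mul_of_nonneg_left e3 hp.le
  rw [one_div] at h5
  nlinarith [h4, h5]

open Real in
theorem truncation_error_bound (n : ℕ) (hn : 1 ≤ n)
    (lam : Fin n → ℝ) (hlam : ∀ i, lam i ≠ 0)
    (m : ℝ) (hm : 0 < m) (hmin : ∀ i, m ≤ |lam i|) (hmem : ∃ i, m = |lam i|)
    (Δ : ℝ) (hΔ : 0 < Δ) (z : ℝ) (N : ℕ) (hN : 1 ≤ N)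
    (φ : ℝ → ℂ)
    (hφ : φ = fun (u : ℝ) => ∏ i : Fin n,
      ((1 : ℂ) - 2 * Complex.I * (u : ℂ) * (lam i : ℂ)) ^ (-(1/2) : ℂ)) :
    |∑' k : ℕ,
        (1 / (π * ((N + 1 + k : ℝ) + 1/2))) *
          (φ (((N + 1 + k : ℝ) + 1/2) * Δ) *
            Complex.exp (-Complex.I * ((N + 1 + k : ℝ) + 1/2) * Δ * z)).im| ≤
      (2 / (n * π)) * (2 * N * Δ * m) ^ (-(n / 2) : ℝ) := by
  have hπ : (0:ℝ) < π := Real.pi_pos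
  set s : ℝ := (n:ℝ)/2 with hs_def
  have hs : 0 < s := by positivity
  have hN1 : (1:ℝ) ≤ (N:ℝ) := by exact_mod_cast hN
  -- the summand
  set a : ℕ → ℝ := fun k =>
      (1 / (π * ((N + 1 + k : ℝ) + 1/2))) *
        (φ (((N + 1 + k : ℝ) + 1/2) * Δ) *
          Complex.exp (-Complex.I * ((N + 1 + k : ℝ) + 1/2) * Δ * z)).im with ha_def
  set h : ℕ → ℝ := fun k => ((N:ℝ) + 1/2 + k) ^ (-s) with hh_def
  set D : ℝ := 2 / (n * π) * (2 * Δ * m) ^ (-s) with hD_def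
  have hD0 : 0 ≤ D := by positivity
  -- φ bound
  have hphi : ∀ u : ℝ, 0 < u → ‖φ u‖ ≤ (2 * u * m) ^ (-s) := by
    intro u hu
    have h2um : (0:ℝ) < 2 * u * m := by positivity
    rw [hφ]
    simp only [norm_prod]
    have hterm : ∀ i : Fin n,
        ‖((1 : ℂ) - 2 * Complex.I * (u : ℂ) * (lam i : ℂ)) ^ (-(1/2) : ℂ)‖
          ≤ (2 * u * m) ^ (-(1/2) : ℝ) := by
      intro i
      set w : ℂ := (1 : ℂ) - 2 * Complex.I * (u : ℂ) * (lam i : ℂ) with hw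
      have hwre : w.re = 1 := by simp [hw]
      have hwim : w.im = -(2 * u * lam i) := by simp [hw]
      have hw0 : w ≠ 0 := fun h0 => by simp [h0] at hwre
      have habs : 2 * u * m ≤ ‖w‖ := by
        calc 2 * u * m ≤ 2 * u * |lam i| := by nlinarith [hmin i]
          _ = |w.im| := by rw [hwim, abs_neg, abs_mul]; rw [abs_of_pos (by positivity : (0:ℝ) < 2*u)]
          _ ≤ ‖w‖ := Complex.abs_im_le_norm w
      rw [Complex.norm_cpow_of_ne_zero hw0,
        show (-(1/2) : ℂ) = ((-(1/2) : ℝ) : ℂ) by norm_num,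
        Complex.ofReal_re, Complex.ofReal_im, mul_zero, Real.exp_zero, div_one]
      exact Real.rpow_le_rpow_of_nonpos h2um habs (by norm_num)
    calc ∏ i : Fin n, ‖((1 : ℂ) - 2 * Complex.I * (u : ℂ) * (lam i : ℂ)) ^ (-(1/2) : ℂ)‖
        ≤ ∏ _i : Fin n, (2 * u * m) ^ (-(1/2) : ℝ) :=
          Finset.prod_le_prod (fun i _ => norm_nonneg _) (fun i _ => hterm i)
      _ = ((2 * u * m) ^ (-(1/2) : ℝ)) ^ n := by rw [Finset.prod_const, Finset.card_univ, Fintype.card_fin]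
      _ = (2 * u * m) ^ (-s) := by
          rw [← Real.rpow_natCast ((2*u*m) ^ (-(1/2):ℝ)) n, ← Real.rpow_mul h2um.le]
          norm_num [hs_def]
          ring_nf
  -- pointwise bound
  have hP : ∀ k : ℕ, |a k| ≤ D * (h k - h (k+1)) := by
    intro k
    have hExp : ∀ v : ℂ, v.im = 0 →
        ‖Complex.exp (-Complex.I * v * (Δ:ℂ) * (z:ℂ))‖ = 1 := by
      intro v hv
      rw [Complex.norm_exp]
      simp [Complex.mul_re, Complex.mul_im, hv]
    set c : ℝ := (N + 1 + k : ℝ) + 1/2 with hc_def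
    have hc : 0 < c := by positivity
    have h1 : |a k| ≤ 1 / (π * c) * ((2 * (c * Δ) * m) ^ (-s)) := by
      rw [ha_def]
      simp only
      rw [abs_mul]
      rw [abs_of_pos (show (0:ℝ) < (1:ℝ) / (π * ((N:ℝ) + 1 + (k:ℝ) + 1/2)) by positivity)]
      rw [show (1:ℝ) / (π * ((N:ℝ) + 1 + (k:ℝ) + 1/2)) = 1 / (π * c) from by rw [hc_def]]
      apply mul_le_mul_of_nonneg_left _ (by positivity)
      refine le_trans (Complex.abs_im_le_norm _) ?_
      rw [norm_mul, hExp _ (by simp), mul_one]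
      refine le_trans (le_of_eq (by rw [hc_def])) (hphi (c * Δ) (by positivity))
    have h2 : (2 * (c * Δ) * m) ^ (-s) = (2 * Δ * m) ^ (-s) * c ^ (-s) := by
      rw [show 2 * (c * Δ) * m = (2 * Δ * m) * c by ring, Real.mul_rpow (by positivity) hc.le]
    have h3 : c ^ (-(s+1)) = c ^ (-s) * c⁻¹ := by
      rw [show -(s+1) = -s + (-1) by ring, Real.rpow_add hc, Real.rpow_neg_one]
    have hstep := aux_step ((N:ℝ) + 1/2 + k) s (by positivity) hs
    have hca : c = ((N:ℝ) + 1/2 + k) + 1 := by rw [hc_def]; ring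
    rw [← hca] at hstep
    have hk1 : (N:ℝ) + 1/2 + ((k:ℝ) + 1) = c := by rw [hc_def]; ring
    have hstep' : s * c ^ (-(s+1)) ≤ h k - h (k+1) := by
      simp only [hh_def]
      push_cast
      rw [hk1]
      exact hstep
    calc |a k| ≤ 1 / (π * c) * ((2 * (c * Δ) * m) ^ (-s)) := h1
      _ = (1/π) * (2 * Δ * m) ^ (-s) * (c ^ (-(s+1))) := by
          rw [h2, h3]; field_simp
      _ ≤ (1/π) * (2 * Δ * m) ^ (-s) * ((h k - h (k+1)) / s) := by
          refine mul_le_mul_of_nonneg_left ?_ (by positivity)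
          rw [le_div_iff₀ hs]
          linarith [hstep']
      _ = D * (h k - h (k+1)) := by
          rw [hD_def]; field_simp; ring
  -- telescoping sum
  have hmono : ∀ k : ℕ, h (k+1) ≤ h k := by
    intro k
    apply Real.rpow_le_rpow_of_nonpos (by positivity) (by push_cast; linarith) (by linarith)
  have htend : Filter.Tendsto h Filter.atTop (nhds 0) := by
    have h1 : Filter.Tendsto (fun k : ℕ => (N:ℝ) + 1/2 + k) Filter.atTop Filter.atTop :=
      Filter.tendsto_atTop_add_const_left _ _ tendsto_natCast_atTop_atTop
    exact (tendsto_rpow_neg_atTop hs).comp h1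
  have hsum : HasSum (fun k => h k - h (k+1)) (h 0) := by
    rw [hasSum_iff_tendsto_nat_of_nonneg (fun k => sub_nonneg.2 (hmono k))]
    simp_rw [Finset.sum_range_sub' h]
    simpa using tendsto_const_nhds.sub htend
  have hsumD : HasSum (fun k => D * (h k - h (k+1))) (D * h 0) := hsum.mul_left D
  have hAbsSummable : Summable (fun k => |a k|) :=
    Summable.of_nonneg_of_le (fun k => abs_nonneg _) hP hsumD.summable
  have hASummable : Summable a := hAbsSummable.of_abs
  have habs0 : |∑' k, a k| ≤ ∑' k, |a k| := by
    have := norm_tsum_le_tsum_norm (f := a)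
      (by simpa only [Real.norm_eq_abs] using hAbsSummable)
    simpa only [Real.norm_eq_abs] using this
  calc |∑' k, a k| ≤ ∑' k, |a k| := habs0
    _ ≤ ∑' k, D * (h k - h (k+1)) := hAbsSummable.tsum_le_tsum hP hsumD.summable
    _ = D * h 0 := hsumD.tsum_eq
    _ ≤ D * (N:ℝ) ^ (-s) := by
        refine mul_le_mul_of_nonneg_left ?_ hD0
        rw [hh_def]
        simp only [Nat.cast_zero, add_zero]
        exact Real.rpow_le_rpow_of_nonpos (by linarith) (by linarith) (by linarith)
    _ = (2 / (n * π)) * (2 * N * Δ * m) ^ (-(n / 2) : ℝ) := by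
        rw [hD_def, hs_def,
          show (2:ℝ) * N * Δ * m = (2 * Δ * m) * N by ring,
          Real.mul_rpow (x := 2*Δ*m) (y := (N:ℝ)) (by positivity) (by positivity)]
        ring
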